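/- Let V ≥ 1, i ∈ {1,...,V}, A, η ∈ ℝ, and β₀,...,β_V ∈ ℝ with Z = Σ_{s=1}^V exp(β_s), N = exp(β₀)+Z, γ = Z/N. Let Z' = Σ_{s=1}^V exp(β_s + η·A·(δ_{si} − exp(β_s)/Z)) and f = (1/η)·log(Z'/Z) (assume η ≠ 0). Define the surrogate loss L'(β) = −A·[β_i − log N] + A·(1 − c)·log Z − f·β₀, where c = γ and f are treated as constants under differentiation (stop-gradient). Then ∂L'/∂β₀ = A·(1 − γ) − f, and ∂L'/∂β_j = −A·(δ_{ji} − exp(β_j)/Z) for all j ≥ 1. -/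

import Mathlib

theorem stmt8 (V : ℕ) (hV : 1 ≤ V) (A η : ℝ) (hη : η ≠ 0)
    (i : Fin V) (β : Fin (V + 1) → ℝ)
    (Z N γ Z' f : ℝ)
    (hZ : Z = ∑ s : Fin V, Real.exp (β s.succ))
    (hN : N = Real.exp (β 0) + Z)
    (hγ : γ = Z / N)
    (hZ' : Z' = ∑ s : Fin V,
      Real.exp (β s.succ + η * A * ((if s = i then 1 else 0) - Real.exp (β s.succ) / Z)))
    (hf : f = (1 / η) * Real.log (Z' / Z))
    (L : (Fin (V + 1) → ℝ) → ℝ)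
    (hL : ∀ b : Fin (V + 1) → ℝ,
      L b = -A * (b i.succ
              - Real.log (Real.exp (b 0) + ∑ s : Fin V, Real.exp (b s.succ)))
            + A * (1 - γ) * Real.log (∑ s : Fin V, Real.exp (b s.succ))
            - f * b 0) :
    deriv (fun x => L (Function.update β 0 x)) (β 0) = A * (1 - γ) - f ∧
    ∀ j : Fin V,
      deriv (fun x => L (Function.update β j.succ x)) (β j.succ)
        = -A * ((if j = i then 1 else 0) - Real.exp (β j.succ) / Z) := by
  have hZpos : 0 < Z := by
    rw [hZ]
    exact Finset.sum_pos (fun s _ => Real.exp_pos _) ⟨i, Finset.mem_univ i⟩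
  have hNpos : 0 < N := by rw [hN]; positivity
  have hexp0 : Real.exp (β 0) = N - Z := by rw [hN]; ring
  constructor
  · have hfun : (fun x => L (Function.update β 0 x)) =
      fun x => -A * (β i.succ - Real.log (Real.exp x + Z))
        + A * (1 - γ) * Real.log Z - f * x := by
      funext x
      rw [hL]
      simp [Function.update_apply, Fin.succ_ne_zero, ← hZ]
    rw [hfun]
    have h1 : HasDerivAt (fun x => Real.exp x + Z) (Real.exp (β 0)) (β 0) :=
      (Real.hasDerivAt_exp _).add_const Z
    have hpos : (0:ℝ) < Real.exp (β 0) + Z := by positivity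
    have h2 := h1.log hpos.ne'
    have h3 := (((hasDerivAt_const (β 0) (β i.succ)).fun_sub h2).const_mul (-A)).add_const
      (A * (1 - γ) * Real.log Z)
    have h4 := h3.fun_sub ((hasDerivAt_id' (x := β 0)).const_mul f)
    rw [h4.deriv, ← hN, hγ, hexp0]
    field_simp
    ring
  · intro j
    have hfun : (fun x => L (Function.update β j.succ x)) =
      fun x => -A * ((if i = j then x else β i.succ)
          - Real.log (Real.exp (β 0) + ∑ s : Fin V, Real.exp (if s = j then x else β s.succ)))
        + A * (1 - γ) * Real.log (∑ s : Fin V, Real.exp (if s = j then x else β s.succ))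
        - f * β 0 := by
      funext x
      rw [hL]
      simp [Function.update_apply, Fin.succ_ne_zero, (Fin.succ_ne_zero j).symm, Fin.succ_inj]
    rw [hfun]
    have hSval : (∑ s : Fin V, Real.exp (if s = j then β j.succ else β s.succ)) = Z := by
      rw [hZ]
      refine Finset.sum_congr rfl fun s _ => ?_
      split
      · next h => rw [h]
      · rfl
    have hS : HasDerivAt (fun x => ∑ s : Fin V, Real.exp (if s = j then x else β s.succ))
        (Real.exp (β j.succ)) (β j.succ) := by
      have h : ∀ s : Fin V, HasDerivAt
          (fun x => Real.exp (if s = j then x else β s.succ))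
          (if s = j then Real.exp (β j.succ) else 0) (β j.succ) := by
        intro s
        by_cases hs : s = j
        · subst hs; simpa using Real.hasDerivAt_exp (β s.succ)
        · simpa [hs] using hasDerivAt_const (β j.succ) (Real.exp (β s.succ))
      have hsum := HasDerivAt.fun_sum (fun s (_ : s ∈ Finset.univ) => h s)
      simpa using hsum
    have hinpos : Real.exp (β 0) + (∑ s : Fin V, Real.exp (if s = j then β j.succ else β s.succ)) ≠ 0 := by
      rw [hSval]; positivity
    have hlog1 := ((hasDerivAt_const (β j.succ) (Real.exp (β 0))).fun_add hS).log hinpos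
    have hlog2 := hS.log (by rw [hSval]; exact hZpos.ne')
    have hu : HasDerivAt (fun x => (if i = j then x else β i.succ))
        (if i = j then (1:ℝ) else 0) (β j.succ) := by
      by_cases hij : i = j
      · simpa [hij] using hasDerivAt_id' (β j.succ)
      · simpa [hij] using hasDerivAt_const (β j.succ) (β i.succ)
    have h5 := (((hu.fun_sub hlog1).const_mul (-A)).fun_add (hlog2.const_mul (A * (1 - γ)))).sub_const
      (f * β 0)
    rw [h5.deriv, hSval, ← hN, hγ]
    have hij : (if i = j then (1:ℝ) else 0) = (if j = i then 1 else 0) := by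
      simp [eq_comm]
    rw [hij]
    generalize (if j = i then (1:ℝ) else 0) = d
    field_simp
    ring
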